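/- Let R be an associative ring with identity that is finitely generated as a ring (i.e., finitely generated as a ℤ-algebra), let n ≥ 2 and k ≥ n be integers, and let K be an algebraically closed field. Call a group homomorphism ρ : E_{k+1}(R) → GL_n(K) irreducible if the only K-linear subspaces of K^n invariant under ρ(γ) for all γ ∈ E_{k+1}(R) are 0 and K^n, and call two homomorphisms ρ₁, ρ₂ conjugate if there exists g ∈ GL_n(K) with ρ₂(γ) = g·ρ₁(γ)·g^{−1} for all γ. Then there are only finitely many conjugacy classes of irreducible homomorphisms E_{k+1}(R) → GL_n(K). -/

import Mathlib

open Matrix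

namespace Paper

/-! ### Generalities -/

lemma one_add_mul_aux {M : Type*} [Ring M] {x y : M} (h1 : x + y = 0) (h2 : x * y = 0) :
    (1 + x) * (1 + y) = 1 := by
  have h : (1 + x) * (1 + y) = 1 + (x + y) + x * y := by noncomm_ring
  rw [h, h1, h2, add_zero, add_zero]

/-- The group of self-homeomorphisms of a topological space, under composition. -/
instance homeomorphGroup (X : Type*) [TopologicalSpace X] : Group (X ≃ₜ X) where
  mul a b := b.trans a
  one := Homeomorph.refl X
  inv := Homeomorph.symm
  mul_assoc a b c := rfl
  one_mul a := Homeomorph.ext fun x => rfl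
  mul_one a := Homeomorph.ext fun x => rfl
  inv_mul_cancel a := Homeomorph.ext fun x => a.symm_apply_apply x

section Elementary

variable (R : Type*) [Ring R]

lemma stdBasis_cancel (n : ℕ) (i j : Fin n) (a : R) :
    Matrix.single i j a + Matrix.single i j (-a) = 0 := by
  rw [← Matrix.single_add, add_neg_cancel, Matrix.single_zero]

/-- The elementary matrix `e_{ij}(r) = 1 + r·E_{ij}` as an invertible matrix,
i.e. an element of `GL_n(R)`. -/
def elemGL (n : ℕ) (i j : Fin n) (hij : i ≠ j) (r : R) : (Matrix (Fin n) (Fin n) R)ˣ where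
  val := 1 + Matrix.single i j r
  inv := 1 + Matrix.single i j (-r)
  val_inv := one_add_mul_aux (stdBasis_cancel R n i j r)
    (Matrix.single_mul_single_of_ne (c := r) i j i (Ne.symm hij) (-r))
  inv_val := one_add_mul_aux
    (by have := stdBasis_cancel R n i j (-r); rwa [neg_neg] at this)
    (Matrix.single_mul_single_of_ne (c := -r) i j i (Ne.symm hij) r)

/-- The elementary group `E_n(R)`: the subgroup of `GL_n(R)` generated by all
elementary matrices. -/
def ElementaryGroup (n : ℕ) : Subgroup (Matrix (Fin n) (Fin n) R)ˣ :=
  Subgroup.closure { A | ∃ (i j : Fin n) (hij : i ≠ j) (r : R), A = elemGL R n i j hij r }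

lemma elemGL_mem (n : ℕ) (i j : Fin n) (hij : i ≠ j) (r : R) :
    elemGL R n i j hij r ∈ ElementaryGroup R n :=
  Subgroup.subset_closure ⟨i, j, hij, r, rfl⟩

/-- The diagonal matrix with `-1` at places `i`, `j` and `1` elsewhere. -/
def negPairDiag (n : ℕ) (i j : Fin n) : Matrix (Fin n) (Fin n) R :=
  Matrix.diagonal fun k => if k = i ∨ k = j then -1 else 1

lemma negPairDiag_mul_self (n : ℕ) (i j : Fin n) :
    negPairDiag R n i j * negPairDiag R n i j = 1 := by
  rw [negPairDiag, Matrix.diagonal_mul_diagonal]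
  have h : (fun k => (if k = i ∨ k = j then (-1 : R) else 1) *
      (if k = i ∨ k = j then (-1 : R) else 1)) = fun _ => (1 : R) := by
    funext k
    by_cases h : k = i ∨ k = j <;> simp [h]
  rw [h, Matrix.diagonal_one]

/-- The matrix `negPairDiag` as an invertible matrix. -/
def negPairGL (n : ℕ) (i j : Fin n) : (Matrix (Fin n) (Fin n) R)ˣ :=
  ⟨negPairDiag R n i j, negPairDiag R n i j,
    negPairDiag_mul_self R n i j, negPairDiag_mul_self R n i j⟩

/-- The matrix `A_{i,i+1}` (0-indexed: diagonal entries `i` and `i+1` equal `-1`). -/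
def APair (n : ℕ) (i : Fin (n - 1)) : (Matrix (Fin n) (Fin n) R)ˣ :=
  negPairGL R n ⟨(i : ℕ), by have := i.isLt; omega⟩ ⟨(i : ℕ) + 1, by have := i.isLt; omega⟩

/-- `E_n(R, 2R)`: the smallest normal subgroup of `E_n(R)` containing all elementary
matrices `e_{ij}(s)` with `s ∈ 2R`. -/
def RelElementaryGroup (n : ℕ) : Subgroup ↥(ElementaryGroup R n) :=
  Subgroup.normalClosure
    { x : ↥(ElementaryGroup R n) | ∃ (i j : Fin n) (hij : i ≠ j) (r : R),
        x.val = elemGL R n i j hij (2 * r) }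

end Elementary

section Symplectic

variable (S : Type*) [CommRing S]

/-- The index involution `σ` on `{0, …, 2n-1}`: `σk = k + n` if `k < n`, else `σk = k - n`. -/
def sigIdx (n : ℕ) (k : Fin (2 * n)) : Fin (2 * n) :=
  if h : (k : ℕ) < n then ⟨(k : ℕ) + n, by omega⟩
  else ⟨(k : ℕ) - n, by have := k.isLt; omega⟩

lemma sigIdx_ne (n : ℕ) (k : Fin (2 * n)) : sigIdx n k ≠ k := by
  have hk := k.isLt
  unfold sigIdx
  split_ifs with h <;>
    · intro hEq
      have h2 := congrArg Fin.val hEq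
      simp only [Fin.val_mk] at h2 -- may need adjusting
      omega

lemma sigIdx_inj (n : ℕ) {k l : Fin (2 * n)} (h : k ≠ l) : sigIdx n k ≠ sigIdx n l := by
  have hk := k.isLt
  have hl := l.isLt
  have hkl : (k : ℕ) ≠ (l : ℕ) := fun hc => h (Fin.ext hc)
  unfold sigIdx
  split_ifs with h1 h2 h2 <;>
    · intro hEq
      have h3 := congrArg Fin.val hEq
      simp only [Fin.val_mk] at h3
      omega

/-- The symplectic elementary matrix `ρ_{ij}(a)`, as a matrix.  When `j = σi` it is
`1 + a E_{i,σi}`; otherwise it is `1 + a E_{ij} - δ a E_{σj,σi}` where `δ = 1` if `i, j`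
are on the same side of `n` and `δ = -1` otherwise. -/
def symElemMat (n : ℕ) (i j : Fin (2 * n)) (a : S) : Matrix (Fin (2 * n)) (Fin (2 * n)) S :=
  if j = sigIdx n i then 1 + Matrix.single i j a
  else 1 + Matrix.single i j a -
    Matrix.single (sigIdx n j) (sigIdx n i)
      ((if ((i : ℕ) < n ↔ (j : ℕ) < n) then 1 else -1) * a)

lemma symElemMat_mul_neg (n : ℕ) (i j : Fin (2 * n)) (hij : i ≠ j) (a : S) :
    symElemMat S n i j a * symElemMat S n i j (-a) = 1 := by
  unfold symElemMat
  set d : S := if ((i : ℕ) < n ↔ (j : ℕ) < n) then 1 else -1 with hd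
  split_ifs with h
  · exact one_add_mul_aux (stdBasis_cancel S _ i j a)
      (Matrix.single_mul_single_of_ne (c := a) i j i (Ne.symm hij) (-a))
  · rw [add_sub_assoc, add_sub_assoc]
    apply one_add_mul_aux
    · have c1 := stdBasis_cancel S _ i j a
      have c2 := stdBasis_cancel S _ (sigIdx n j) (sigIdx n i) (d * a)
      rw [mul_neg]
      calc Matrix.single i j a - Matrix.single (sigIdx n j) (sigIdx n i) (d * a) +
            (Matrix.single i j (-a) - Matrix.single (sigIdx n j) (sigIdx n i) (-(d * a)))
          = (Matrix.single i j a + Matrix.single i j (-a)) -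
            (Matrix.single (sigIdx n j) (sigIdx n i) (d * a) +
              Matrix.single (sigIdx n j) (sigIdx n i) (-(d * a))) := by abel
        _ = 0 := by rw [c1, c2, sub_zero]
    · simp only [sub_mul, mul_sub]
      rw [Matrix.single_mul_single_of_ne (c := a) i j i (Ne.symm hij) (-a),
        Matrix.single_mul_single_of_ne (c := a) i j (sigIdx n j) (Ne.symm (sigIdx_ne n j)) (d * -a),
        Matrix.single_mul_single_of_ne (c := d * a) (sigIdx n j) (sigIdx n i) i (sigIdx_ne n i) (-a),
        Matrix.single_mul_single_of_ne (c := d * a) (sigIdx n j) (sigIdx n i) (sigIdx n j)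
          (sigIdx_inj n hij) (d * -a)]
      simp

/-- The symplectic elementary matrix `ρ_{ij}(a)` as an invertible matrix. -/
def symElemGL (n : ℕ) (i j : Fin (2 * n)) (hij : i ≠ j) (a : S) :
    (Matrix (Fin (2 * n)) (Fin (2 * n)) S)ˣ where
  val := symElemMat S n i j a
  inv := symElemMat S n i j (-a)
  val_inv := symElemMat_mul_neg S n i j hij a
  inv_val := by have := symElemMat_mul_neg S n i j hij (-a); rwa [neg_neg] at this

/-- The elementary symplectic group `Ep_{2n}(S)`, generated by all symplectic
elementary matrices. -/
def EpGroup (n : ℕ) : Subgroup (Matrix (Fin (2 * n)) (Fin (2 * n)) S)ˣ :=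
  Subgroup.closure
    { A | ∃ (i j : Fin (2 * n)) (hij : i ≠ j) (a : S), A = symElemGL S n i j hij a }

/-- The matrix `J = [[0, I_n], [-I_n, 0]]` of the standard symplectic form. -/
def Jmat (n : ℕ) : Matrix (Fin (2 * n)) (Fin (2 * n)) S :=
  Matrix.of fun i j =>
    if (i : ℕ) + n = (j : ℕ) then 1 else if (j : ℕ) + n = (i : ℕ) then -1 else 0

/-- The symplectic group `Sp_{2n}(S)`: invertible `2n × 2n` matrices `M` with
`Mᵀ * J * M = J`. -/
def SpGroup (n : ℕ) : Subgroup (Matrix (Fin (2 * n)) (Fin (2 * n)) S)ˣ where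
  carrier := { M | (↑M : Matrix (Fin (2 * n)) (Fin (2 * n)) S)ᵀ * Jmat S n * ↑M = Jmat S n }
  one_mem' := by simp
  mul_mem' := by
    intro a b ha hb
    show (↑(a * b) : Matrix (Fin (2 * n)) (Fin (2 * n)) S)ᵀ * Jmat S n *
        (↑(a * b) : Matrix (Fin (2 * n)) (Fin (2 * n)) S) = Jmat S n
    rw [Units.val_mul, Matrix.transpose_mul]
    calc (↑b : Matrix (Fin (2*n)) (Fin (2*n)) S)ᵀ * (↑a : Matrix (Fin (2*n)) (Fin (2*n)) S)ᵀ *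
          Jmat S n * (↑a * ↑b)
        = (↑b : Matrix (Fin (2*n)) (Fin (2*n)) S)ᵀ *
            ((↑a : Matrix (Fin (2*n)) (Fin (2*n)) S)ᵀ * Jmat S n * ↑a) * ↑b := by
          noncomm_ring
      _ = (↑b : Matrix (Fin (2*n)) (Fin (2*n)) S)ᵀ * Jmat S n * ↑b := by rw [ha]
      _ = Jmat S n := hb
  inv_mem' := by
    intro a ha
    have ha' : (↑a : Matrix (Fin (2 * n)) (Fin (2 * n)) S)ᵀ * Jmat S n *
        (↑a : Matrix (Fin (2 * n)) (Fin (2 * n)) S) = Jmat S n := ha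
    show ((a⁻¹ : (Matrix (Fin (2 * n)) (Fin (2 * n)) S)ˣ) :
        Matrix (Fin (2 * n)) (Fin (2 * n)) S)ᵀ * Jmat S n *
        ((a⁻¹ : (Matrix (Fin (2 * n)) (Fin (2 * n)) S)ˣ) :
        Matrix (Fin (2 * n)) (Fin (2 * n)) S) = Jmat S n
    set A : Matrix (Fin (2 * n)) (Fin (2 * n)) S := ↑a with hA
    set B : Matrix (Fin (2 * n)) (Fin (2 * n)) S := ((a⁻¹ :
        (Matrix (Fin (2 * n)) (Fin (2 * n)) S)ˣ) : Matrix (Fin (2 * n)) (Fin (2 * n)) S) with hB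
    have h1 : A * B = 1 := a.mul_inv
    calc Bᵀ * Jmat S n * B
        = Bᵀ * (Aᵀ * Jmat S n * A) * B := by rw [ha']
      _ = (A * B)ᵀ * Jmat S n * (A * B) := by rw [Matrix.transpose_mul]; noncomm_ring
      _ = Jmat S n := by rw [h1]; simp

end Symplectic

section Extra

variable (R : Type*) [Ring R]

/-- Index of the `(2i-1)`-th row (1-indexed), i.e. `2i` 0-indexed. -/
def bIdx0 (k : ℕ) (i : Fin k) : Fin (2 * k) := ⟨2 * (i : ℕ), by have := i.isLt; omega⟩

def bIdx1 (k : ℕ) (i : Fin k) : Fin (2 * k) := ⟨2 * (i : ℕ) + 1, by have := i.isLt; omega⟩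

lemma bIdx_ne (k : ℕ) (i : Fin k) : bIdx0 k i ≠ bIdx1 k i := by
  simp only [bIdx0, bIdx1, ne_eq, Fin.mk.injEq]
  omega

/-- The matrix `B_i = e_{2i-1,2i}(1) e_{2i,2i-1}(-1) e_{2i-1,2i}(1) e_{2i,2i-1}(-1)`
(1-indexed) in `E_{2k}(R)`. -/
def Bmat (k : ℕ) (i : Fin k) : (Matrix (Fin (2 * k)) (Fin (2 * k)) R)ˣ :=
  elemGL R (2 * k) (bIdx0 k i) (bIdx1 k i) (bIdx_ne k i) 1 *
  elemGL R (2 * k) (bIdx1 k i) (bIdx0 k i) (bIdx_ne k i).symm (-1) *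
  elemGL R (2 * k) (bIdx0 k i) (bIdx1 k i) (bIdx_ne k i) 1 *
  elemGL R (2 * k) (bIdx1 k i) (bIdx0 k i) (bIdx_ne k i).symm (-1)

end Extra

section SymplecticExtra

variable (S : Type*) [CommRing S]

def cIdx0 (n : ℕ) (i : Fin n) : Fin (2 * n) := ⟨(i : ℕ), by have := i.isLt; omega⟩

def cIdx1 (n : ℕ) (i : Fin n) : Fin (2 * n) := ⟨n + (i : ℕ), by have := i.isLt; omega⟩

lemma cIdx_ne (n : ℕ) (i : Fin n) : cIdx0 n i ≠ cIdx1 n i := by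
  have := i.pos
  simp only [cIdx0, cIdx1, ne_eq, Fin.mk.injEq]
  omega

/-- The matrix `C_i = ρ_{i,n+i}(1) ρ_{n+i,i}(-1) ρ_{i,n+i}(1) ρ_{n+i,i}(-1)` in
`Sp_{2n}(S)`. -/
def Cmat (n : ℕ) (i : Fin n) : (Matrix (Fin (2 * n)) (Fin (2 * n)) S)ˣ :=
  symElemGL S n (cIdx0 n i) (cIdx1 n i) (cIdx_ne n i) 1 *
  symElemGL S n (cIdx1 n i) (cIdx0 n i) (cIdx_ne n i).symm (-1) *
  symElemGL S n (cIdx0 n i) (cIdx1 n i) (cIdx_ne n i) 1 *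
  symElemGL S n (cIdx1 n i) (cIdx0 n i) (cIdx_ne n i).symm (-1)

/-- The equivalence `Fin n ⊕ Fin n ≃ Fin (2 * n)`. -/
def finDouble (n : ℕ) : Fin n ⊕ Fin n ≃ Fin (2 * n) :=
  finSumFinEquiv.trans (finCongr (two_mul n).symm)

/-- The block-diagonal matrix `diag(A, B)` as a `2n × 2n` matrix. -/
def blockDiag2 (n : ℕ) (A B : Matrix (Fin n) (Fin n) S) :
    Matrix (Fin (2 * n)) (Fin (2 * n)) S :=
  Matrix.reindex (finDouble n) (finDouble n) (Matrix.fromBlocks A 0 0 B)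

lemma blockDiag2_mul (n : ℕ) (A B A' B' : Matrix (Fin n) (Fin n) S) :
    blockDiag2 S n A B * blockDiag2 S n A' B' = blockDiag2 S n (A * A') (B * B') := by
  unfold blockDiag2
  rw [Matrix.reindex_apply, Matrix.reindex_apply, Matrix.reindex_apply,
    Matrix.submatrix_mul_equiv, Matrix.fromBlocks_multiply]
  simp

lemma blockDiag2_one (n : ℕ) : blockDiag2 S n 1 1 = 1 := by
  unfold blockDiag2
  rw [Matrix.reindex_apply, Matrix.fromBlocks_one, Matrix.submatrix_one_equiv]

/-- The hyperbolic embedding `A ↦ diag(A, (Aᵀ)⁻¹) = diag(A, (A⁻¹)ᵀ)` from `GL_n(S)`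
to `GL_{2n}(S)`. -/
def hypGL (n : ℕ) (A : (Matrix (Fin n) (Fin n) S)ˣ) :
    (Matrix (Fin (2 * n)) (Fin (2 * n)) S)ˣ where
  val := blockDiag2 S n ↑A ((↑(A⁻¹) : Matrix (Fin n) (Fin n) S)ᵀ)
  inv := blockDiag2 S n ↑(A⁻¹) ((↑A : Matrix (Fin n) (Fin n) S)ᵀ)
  val_inv := by
    rw [blockDiag2_mul, ← Matrix.transpose_mul, A.mul_inv, Matrix.transpose_one,
      blockDiag2_one]
  inv_val := by
    rw [blockDiag2_mul, ← Matrix.transpose_mul, A.inv_mul, Matrix.transpose_one,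
      blockDiag2_one]

end SymplecticExtra



/-! ### Auxiliary material for Statement 14 -/

section Statement14Aux

open Module

universe u v

section ElemIdentities

variable {R : Type*} [Ring R]
variable {n : ℕ}

lemma elemGL_val (i j : Fin n) (hij : i ≠ j) (r : R) :
    (elemGL R n i j hij r).val = 1 + Matrix.single i j r := rfl

lemma one_add_mul_one_add {M : Type*} [Ring M] (x y : M) :
    (1 + x) * (1 + y) = 1 + x + y + x * y := by noncomm_ring

lemma stdBasisMatrix_neg' (i j : Fin n) (a : R) :
    Matrix.single i j (-a) = -Matrix.single i j a :=
  eq_neg_of_add_eq_zero_right (by rw [← Matrix.single_add, add_neg_cancel,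
    Matrix.single_zero])

/-- R0: `e_{ij}(-r) = e_{ij}(r)⁻¹`. -/
lemma elemGL_neg (i j : Fin n) (hij : i ≠ j) (r : R) :
    elemGL R n i j hij (-r) = (elemGL R n i j hij r)⁻¹ := by
  have h : elemGL R n i j hij r * elemGL R n i j hij (-r) = 1 := by
    apply Units.ext
    rw [Units.val_mul, elemGL_val, elemGL_val, one_add_mul_one_add,
      Matrix.single_mul_single_of_ne (c := r) i j _ (Ne.symm hij) (-r), stdBasisMatrix_neg']
    simp only [Units.val_one]
    abel
  exact (eq_inv_of_mul_eq_one_right h).symm ▸ rfl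

/-- R1: commuting elementary matrices. -/
lemma elemGL_comm (i j k l : Fin n) (hij : i ≠ j) (hkl : k ≠ l)
    (h1 : j ≠ k) (h2 : i ≠ l) (p q : R) :
    elemGL R n i j hij p * elemGL R n k l hkl q
      = elemGL R n k l hkl q * elemGL R n i j hij p := by
  apply Units.ext
  rw [Units.val_mul, Units.val_mul, elemGL_val, elemGL_val,
    one_add_mul_one_add, one_add_mul_one_add,
    Matrix.single_mul_single_of_ne (c := p) i j _ h1 q,
    Matrix.single_mul_single_of_ne (c := q) k l _ (fun h => h2 h.symm) p]
  abel

/-- R3: `e_{ik}(p) e_{kj}(q) = e_{ij}(p q) e_{kj}(q) e_{ik}(p)`. -/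
lemma elemGL_comm3 (i j k : Fin n) (hik : i ≠ k) (hkj : k ≠ j) (hij : i ≠ j) (p q : R) :
    elemGL R n i k hik p * elemGL R n k j hkj q
      = elemGL R n i j hij (p * q) * elemGL R n k j hkj q * elemGL R n i k hik p := by
  apply Units.ext
  rw [Units.val_mul, Units.val_mul, Units.val_mul]
  simp only [elemGL_val]
  rw [one_add_mul_one_add, Matrix.single_mul_single_same,
    one_add_mul_one_add,
    Matrix.single_mul_single_of_ne (c := (p*q)) i j _ (Ne.symm hkj) q, add_zero]
  rw [mul_add, mul_one, add_mul, add_mul, one_mul,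
    Matrix.single_mul_single_of_ne (c := (p*q)) i j _ (Ne.symm hij) p,
    Matrix.single_mul_single_of_ne (c := q) k j _ (Ne.symm hij) p]
  abel

/-- R2: `e_{ij}(p) e_{ki}(q) = e_{ki}(q) e_{ij}(p) e_{kj}(-(q p))`. -/
lemma elemGL_comm2 (i j k : Fin n) (hij : i ≠ j) (hki : k ≠ i) (hkj : k ≠ j) (p q : R) :
    elemGL R n i j hij p * elemGL R n k i hki q
      = elemGL R n k i hki q * elemGL R n i j hij p * elemGL R n k j hkj (-(q * p)) := by
  apply Units.ext
  rw [Units.val_mul, Units.val_mul, Units.val_mul]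
  simp only [elemGL_val]
  rw [one_add_mul_one_add, Matrix.single_mul_single_of_ne (c := p) i j _ (Ne.symm hkj) q,
    one_add_mul_one_add, Matrix.single_mul_single_same, add_zero]
  rw [mul_add, mul_one, add_mul, add_mul, add_mul, one_mul,
    Matrix.single_mul_single_of_ne (c := q) k i _ (Ne.symm hki) (-(q*p)),
    Matrix.single_mul_single_of_ne (c := p) i j _ (Ne.symm hkj) (-(q*p)),
    Matrix.single_mul_single_of_ne (c := (q*p)) k j _ (Ne.symm hkj) (-(q*p)),
    stdBasisMatrix_neg']
  abel





end ElemIdentities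



variable {K : Type u} [Field K]

section SC
variable {V : Type v} [AddCommGroup V] [Module K V]

/-- An endomorphism for which every vector is an eigenvector is scalar. -/
lemma scalar_of_forall_eigen (z : Module.End K V) (hz : ∀ v : V, ∃ c : K, z v = c • v) :
    ∃ c : K, z = c • (1 : Module.End K V) := by
  rcases subsingleton_or_nontrivial V with hV | hV
  · exact ⟨0, LinearMap.ext fun v => Subsingleton.elim _ _⟩
  obtain ⟨v₀, hv₀⟩ := exists_ne (0 : V)
  obtain ⟨c₀, hc₀⟩ := hz v₀
  refine ⟨c₀, LinearMap.ext fun v => ?_⟩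
  simp only [LinearMap.smul_apply, Module.End.one_apply]
  by_cases hv : v ∈ Submodule.span K {v₀}
  · obtain ⟨t, rfl⟩ := Submodule.mem_span_singleton.mp hv
    rw [_root_.map_smul, hc₀, smul_comm]
  · obtain ⟨c, hc⟩ := hz v
    obtain ⟨c', hc'⟩ := hz (v + v₀)
    have key : (c - c') • v = (c' - c₀) • v₀ := by
      have h2 : c • v + c₀ • v₀ = c' • v + c' • v₀ := by
        rw [← hc, ← hc₀, ← map_add, hc', smul_add]
      rw [sub_smul, sub_smul, sub_eq_sub_iff_add_eq_add, h2, add_comm]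
    have hcc' : c = c' := by
      by_contra hne
      apply hv
      have : v = (c - c')⁻¹ • ((c' - c₀) • v₀) := by
        rw [← key, smul_smul, inv_mul_cancel₀ (sub_ne_zero.mpr hne), one_smul]
      rw [this]
      exact Submodule.smul_mem _ _ (Submodule.smul_mem _ _ (Submodule.mem_span_singleton_self v₀))
    have h0 : (c' - c₀) • v₀ = 0 := by rw [← key, hcc', sub_self, zero_smul]
    have hc'c₀ : c' = c₀ := by
      rcases smul_eq_zero.mp h0 with h | h
      · exact sub_eq_zero.mp h
      · exact absurd h hv₀
    rw [hc, hcc', hc'c₀]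
end SC

section CE
variable [IsAlgClosed K]

/-- A commuting family of endomorphisms of a nonzero finite-dimensional space over an
algebraically closed field has a common eigenvector. -/
lemma exists_common_eigenvector {ι : Type*} :
    ∀ (d : ℕ) (V : Type v) [AddCommGroup V] [Module K V] [FiniteDimensional K V]
      [Nontrivial V], finrank K V ≤ d → ∀ (f : ι → Module.End K V),
      (∀ a b, Commute (f a) (f b)) →
      ∃ v : V, v ≠ 0 ∧ ∀ a, ∃ c : K, f a v = c • v := by
  intro d
  induction d with
  | zero =>
    intro V _ _ _ _ hd f _
    exact absurd (lt_of_lt_of_le Module.finrank_pos hd) (by omega)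
  | succ d ih =>
    intro V _ _ _ _ hd f hcomm
    by_cases H : ∃ a μ, Module.End.eigenspace (f a) μ ≠ ⊥ ∧ Module.End.eigenspace (f a) μ ≠ ⊤
    · obtain ⟨a, μ, hne, hnetop⟩ := H
      set E := Module.End.eigenspace (f a) μ with hE
      have hinv : ∀ b, ∀ x ∈ E, f b x ∈ E := by
        intro b x hx
        rw [hE, Module.End.mem_eigenspace_iff] at hx ⊢
        calc (f a) ((f b) x) = (f b) ((f a) x) := by
              rw [← Module.End.mul_apply, ← Module.End.mul_apply, (hcomm a b).eq]
          _ = μ • (f b) x := by rw [hx, _root_.map_smul]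
      haveI : Nontrivial E := Submodule.nontrivial_iff_ne_bot.mpr hne
      have hrank : finrank K E ≤ d := by
        have := Submodule.finrank_lt (K := K) hnetop
        omega
      obtain ⟨v, hv0, hv⟩ := ih E hrank (fun b => (f b).restrict (hinv b))
        (fun b b' => by
          apply LinearMap.ext
          intro x
          apply Subtype.ext
          simp only [Module.End.mul_apply, LinearMap.restrict_apply]
          have h := LinearMap.congr_fun ((hcomm b b').eq) (x : V)
          simpa [Module.End.mul_apply] using h)
      refine ⟨(v : V), fun h => hv0 (Subtype.ext h), fun b => ?_⟩
      obtain ⟨c, hc⟩ := hv b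
      exact ⟨c, by simpa [Subtype.ext_iff, LinearMap.restrict_apply] using hc⟩
    · push_neg at H
      obtain ⟨v, hv⟩ := exists_ne (0 : V)
      refine ⟨v, hv, fun a => ?_⟩
      obtain ⟨μ, hμ⟩ := Module.End.exists_eigenvalue (f a)
      have := H a μ (Module.End.hasEigenvalue_iff.mp hμ)
      exact ⟨μ, Module.End.mem_eigenspace_iff.mp (this ▸ Submodule.mem_top)⟩
end CE

section LI
variable {V : Type v} [AddCommGroup V] [Module K V] [FiniteDimensional K V]

/-- Common eigenvectors with pairwise distinct characters are linearly independent;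
hence there are at most `finrank` many of them. -/
lemma card_le_finrank_of_sep_eigenvectors {ι A : Type*} [Fintype ι]
    (T : A → Module.End K V) (w : ι → V) (χ : ι → A → K)
    (hw : ∀ j, w j ≠ 0) (heig : ∀ j a, T a (w j) = χ j a • w j)
    (hsep : ∀ j j', j ≠ j' → ∃ a, χ j a ≠ χ j' a) :
    Fintype.card ι ≤ finrank K V := by
  classical
  have main : ∀ s : Finset ι, ∀ g : ι → K,
      (∑ j ∈ s, g j • w j = 0) → ∀ j ∈ s, g j = 0 := by
    intro s
    induction s using Finset.strongInduction with
    | _ s ihs =>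
      intro g hsum j₀ hj₀
      -- first: all other coefficients vanish
      have hothers : ∀ j₁ ∈ s, j₁ ≠ j₀ → g j₁ = 0 := by
        intro j₁ hj₁ hne
        obtain ⟨a, ha⟩ := hsep j₁ j₀ hne
        have h1 : ∑ j ∈ s, (g j * (χ j a - χ j₀ a)) • w j = 0 := by
          have hTa : T a (∑ j ∈ s, g j • w j) = ∑ j ∈ s, (g j * χ j a) • w j := by
            rw [map_sum]
            refine Finset.sum_congr rfl fun j _ => ?_
            rw [_root_.map_smul, heig, smul_smul]
          have h2 : ∑ j ∈ s, (g j * χ j₀ a) • w j = 0 := by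
            have : ∑ j ∈ s, (g j * χ j₀ a) • w j = χ j₀ a • ∑ j ∈ s, g j • w j := by
              rw [Finset.smul_sum]
              exact Finset.sum_congr rfl fun j _ => by rw [smul_smul, mul_comm]
            rw [this, hsum, smul_zero]
          have h3 : ∑ j ∈ s, (g j * χ j a) • w j = 0 := by
            rw [← hTa, hsum, map_zero]
          calc ∑ j ∈ s, (g j * (χ j a - χ j₀ a)) • w j
              = ∑ j ∈ s, ((g j * χ j a) • w j - (g j * χ j₀ a) • w j) := by
                refine Finset.sum_congr rfl fun j _ => ?_
                rw [mul_sub, sub_smul]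
            _ = 0 := by rw [Finset.sum_sub_distrib, h2, h3, sub_zero]
        have hz : ∑ j ∈ s.erase j₀, (g j * (χ j a - χ j₀ a)) • w j = 0 := by
          rw [Finset.sum_erase _ (by rw [sub_self, mul_zero, zero_smul])]
          exact h1
        have := ihs (s.erase j₀) (Finset.erase_ssubset hj₀)
          (fun j => g j * (χ j a - χ j₀ a)) hz j₁ (Finset.mem_erase.mpr ⟨hne, hj₁⟩)
        rcases mul_eq_zero.mp this with h | h
        · exact h
        · exact absurd (sub_eq_zero.mp h) ha
      -- now the j₀ coefficient
      have : g j₀ • w j₀ = 0 := by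
        have : ∑ j ∈ s, g j • w j = g j₀ • w j₀ := by
          rw [← Finset.add_sum_erase _ _ hj₀]
          have : ∑ j ∈ s.erase j₀, g j • w j = 0 :=
            Finset.sum_eq_zero fun j hj => by
              rw [hothers j (Finset.mem_of_mem_erase hj) (Finset.ne_of_mem_erase hj),
                zero_smul]
          rw [this, add_zero]
        rw [← this, hsum]
      rcases smul_eq_zero.mp this with h | h
      · exact h
      · exact absurd h (hw j₀)
  have hli : LinearIndependent K w := by
    rw [Fintype.linearIndependent_iff]
    intro g hg
    intro i
    exact main Finset.univ g hg i (Finset.mem_univ i)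
  exact hli.fintype_card_le_finrank
end LI







section Helpers

lemma triv_of_rel {G : Type*} [Group G] {a b z : G} (h : a * b = z * b * a)
    (hc : a = 1 ∨ b = 1 ∨ a * b = b * a) : z = 1 := by
  have hz : z = a * b * a⁻¹ * b⁻¹ := by
    have h2 : z * (b * a) = a * b := by rw [← mul_assoc]; exact h.symm
    have : z = (a * b) * (b * a)⁻¹ := by
      rw [← h2, mul_assoc, mul_inv_cancel, mul_one]
    rw [this, _root_.mul_inv_rev, ← mul_assoc]
  rcases hc with h1 | h1 | h1
  · rw [hz, h1]; simp
  · rw [hz, h1]; simp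
  · rw [hz, h1, mul_inv_cancel_right, mul_inv_cancel]

lemma exists_third {m : ℕ} (hm : 3 ≤ m) (i j : Fin m) : ∃ k : Fin m, k ≠ i ∧ k ≠ j := by
  classical
  by_contra h
  push_neg at h
  have hsub : (Finset.univ : Finset (Fin m)) ⊆ {i, j} := by
    intro k _
    rcases eq_or_ne k i with rfl | hk
    · simp
    · simp [h k hk]
  have h1 := Finset.card_le_card hsub
  rw [Finset.card_univ, Fintype.card_fin] at h1
  have h2 : ({i, j} : Finset (Fin m)).card ≤ 2 :=
    (Finset.card_insert_le _ _).trans (by simp)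
  omega

lemma lt_two_pow_pred : ∀ m : ℕ, 3 ≤ m → m < 2 ^ (m - 1) := by
  intro m hm
  induction m, hm using Nat.le_induction with
  | base => norm_num
  | succ m hm ih =>
    have h2 : 2 ^ m = 2 * 2 ^ (m - 1) := by
      rw [← pow_succ']
      congr 1
      omega
    simp only [Nat.add_sub_cancel]
    omega

lemma eq_one_of_smul_eq {K : Type u} [Field K] {V : Type v} [AddCommGroup V] [Module K V]
    {a : K} {v : V} (h : a • v = v) (hv : v ≠ 0) : a = 1 := by
  have h0 : (a - 1) • v = 0 := by rw [sub_smul, one_smul, h, sub_self]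
  rcases smul_eq_zero.mp h0 with h2 | h2
  · exact sub_eq_zero.mp h2
  · exact absurd h2 hv

lemma castSucc_ne {m : ℕ} {a b : Fin m} (h : a ≠ b) : a.castSucc ≠ b.castSucc :=
  fun hh => h (Fin.castSucc_inj.mp hh)

/-- Propagation: if all roots away from the index `lst` are trivial, all roots are. -/
lemma propagate_of_L {G : Type*} [Group G] {R : Type*} [Ring R] {N : ℕ} (hN : 3 ≤ N)
    (lst : Fin N) (f : (i j : Fin N) → i ≠ j → R → G)
    (hR3 : ∀ (i j k : Fin N) (hik : i ≠ k) (hkj : k ≠ j) (hij : i ≠ j) (p q : R),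
      f i k hik p * f k j hkj q = f i j hij (p * q) * f k j hkj q * f i k hik p)
    (hL : ∀ (i j : Fin N) (hij : i ≠ j) (r : R), i ≠ lst → j ≠ lst → f i j hij r = 1) :
    ∀ (i j : Fin N) (h : i ≠ j) (r : R), f i j h r = 1 := by
  intro i j hij r
  by_cases hi : i = lst
  · have hj : j ≠ lst := fun h => hij (hi.trans h.symm)
    obtain ⟨a, hai, haj⟩ := exists_third (by omega : (3:ℕ) ≤ N) i j
    have halst : a ≠ lst := hi ▸ hai
    have hrel := hR3 i j a (Ne.symm hai) haj hij r 1
    have hb : f a j haj 1 = 1 := hL a j haj 1 halst hj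
    have := triv_of_rel hrel (Or.inr (Or.inl hb))
    rwa [mul_one] at this
  · by_cases hj : j = lst
    · obtain ⟨a, hai, haj⟩ := exists_third (by omega : (3:ℕ) ≤ N) i j
      have halst : a ≠ lst := hj ▸ haj
      have hrel := hR3 i j a (Ne.symm hai) haj hij r 1
      have ha : f i a (Ne.symm hai) r = 1 := hL i a (Ne.symm hai) r hi halst
      have := triv_of_rel hrel (Or.inl ha)
      rwa [mul_one] at this
    · exact hL i j hij r hi hj

end Helpers



variable [IsAlgClosed K]

/-- If `z` is a non-scalar endomorphism of a 2-dimensional space, any two endomorphisms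
commuting with `z` commute with each other. -/
lemma commute_of_commute_nonscalar {V : Type v} [AddCommGroup V] [Module K V]
    [FiniteDimensional K V] (hd2 : finrank K V = 2)
    {z A B : Module.End K V} (hzA : Commute z A) (hzB : Commute z B)
    (hz : ¬ ∃ c : K, z = c • 1) : Commute A B := by
  have hex : ∃ v : V, z v ∉ Submodule.span K {v} := by
    by_contra hall
    push_neg at hall
    exact hz (scalar_of_forall_eigen z (fun v => by
      obtain ⟨c, hc⟩ := Submodule.mem_span_singleton.mp (hall v)
      exact ⟨c, hc.symm⟩))
  obtain ⟨v, hv⟩ := hex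
  have hv0 : v ≠ 0 := by
    rintro rfl
    exact hv (by simp)
  have hspan : Submodule.span K ({v, z v} : Set V) = ⊤ := by
    have hlt : Submodule.span K ({v} : Set V) < Submodule.span K ({v, z v} : Set V) := by
      refine lt_of_le_of_ne (Submodule.span_mono (by simp)) (fun h => hv ?_)
      rw [h]
      exact Submodule.subset_span (by simp)
    have h1 : finrank K (Submodule.span K ({v} : Set V)) = 1 := finrank_span_singleton hv0
    have h2 := Submodule.finrank_lt_finrank_of_lt hlt
    have h3 : finrank K (Submodule.span K ({v, z v} : Set V)) ≤ 2 :=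
      hd2 ▸ Submodule.finrank_le _
    exact Submodule.eq_top_of_finrank_eq (by omega)
  have rep : ∀ C : Module.End K V, Commute z C → ∃ a b : K, C = a • 1 + b • z := by
    intro C hC
    have hCv : C v ∈ Submodule.span K ({v, z v} : Set V) := hspan ▸ Submodule.mem_top
    obtain ⟨a, b, hab⟩ := Submodule.mem_span_pair.mp hCv
    refine ⟨a, b, ?_⟩
    apply LinearMap.ext_on hspan
    rintro x (rfl | rfl)
    · simp only [LinearMap.add_apply, LinearMap.smul_apply, Module.End.one_apply]
      exact hab.symm
    · have hCzv : C (z v) = z (C v) := by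
        have h := LinearMap.congr_fun hC.eq v
        simpa [Module.End.mul_apply] using h.symm
      simp only [LinearMap.add_apply, LinearMap.smul_apply, Module.End.one_apply]
      rw [hCzv, ← hab, map_add, _root_.map_smul, _root_.map_smul]
  obtain ⟨a, b, hA⟩ := rep A hzA
  obtain ⟨a', b', hB⟩ := rep B hzB
  rw [Commute, SemiconjBy, hA, hB]
  simp only [mul_add, add_mul, smul_mul_assoc, mul_smul_comm, one_mul, mul_one, smul_smul]
  module


set_option maxHeartbeats 1000000 in
/-- Key theorem: any system of "elementary root units" in the endomorphisms of a
space of dimension `< m` (with `3 ≤ m`) satisfying the Steinberg-type relations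
is trivial. -/
theorem key (R : Type*) [Ring R] :
    ∀ (m : ℕ), 3 ≤ m → ∀ (V : Type v) [AddCommGroup V] [Module K V],
      ∀ [FiniteDimensional K V], finrank K V < m →
      ∀ (f : (i j : Fin m) → i ≠ j → R → (Module.End K V)ˣ),
      (∀ (i j : Fin m) (h : i ≠ j) (r : R), f i j h (-r) = (f i j h r)⁻¹) →
      (∀ (i j k l : Fin m) (hij : i ≠ j) (hkl : k ≠ l), j ≠ k → i ≠ l → ∀ (p q : R),
        f i j hij p * f k l hkl q = f k l hkl q * f i j hij p) →
      (∀ (i j k : Fin m) (hij : i ≠ j) (hki : k ≠ i) (hkj : k ≠ j) (p q : R),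
        f i j hij p * f k i hki q = f k i hki q * f i j hij p * f k j hkj (-(q * p))) →
      (∀ (i j k : Fin m) (hik : i ≠ k) (hkj : k ≠ j) (hij : i ≠ j) (p q : R),
        f i k hik p * f k j hkj q = f i j hij (p * q) * f k j hkj q * f i k hik p) →
      ∀ (i j : Fin m) (h : i ≠ j) (r : R), f i j h r = 1 := by
  intro m hm
  induction m, hm using Nat.le_induction with
  | base =>
    intro V _ _ _ hdim f hR0 hR1 hR2 hR3
    -- Phase A : every root is scalar
    have hscal : ∀ (i j : Fin 3) (h : i ≠ j) (r : R),
        ∃ c : K, ((f i j h r : (Module.End K V)ˣ) : Module.End K V) = c • 1 := by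
      intro i j hij r
      by_cases hd : finrank K V ≤ 1
      · apply scalar_of_forall_eigen
        intro x
        by_cases hx : x = 0
        · exact ⟨0, by simp [hx]⟩
        · haveI : Nontrivial V := nontrivial_of_ne x 0 hx
          have hsp : Submodule.span K ({x} : Set V) = ⊤ := by
            apply Submodule.eq_top_of_finrank_eq
            have h1 := finrank_span_singleton (K := K) hx
            have h2 : 0 < finrank K V := finrank_pos
            omega
          have hmem : ((f i j hij r : (Module.End K V)ˣ) : Module.End K V) x
              ∈ Submodule.span K ({x} : Set V) := hsp ▸ Submodule.mem_top
          obtain ⟨c, hc⟩ := Submodule.mem_span_singleton.mp hmem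
          exact ⟨c, hc.symm⟩
      · have hd2 : finrank K V = 2 := by omega
        by_contra hz
        obtain ⟨k, hki, hkj⟩ := exists_third (le_refl 3) i j
        have hcA : Commute ((f i j hij r : (Module.End K V)ˣ) : Module.End K V)
            ((f i k (Ne.symm hki) r : (Module.End K V)ˣ) : Module.End K V) := by
          have h := congrArg Units.val
            (hR1 i j i k hij (Ne.symm hki) (Ne.symm hij) (Ne.symm hki) r r)
          simpa [Commute, SemiconjBy, Units.val_mul] using h
        have hcB : Commute ((f i j hij r : (Module.End K V)ˣ) : Module.End K V)
            ((f k j hkj 1 : (Module.End K V)ˣ) : Module.End K V) := by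
          have h := congrArg Units.val (hR1 i j k j hij hkj (Ne.symm hkj) hij r 1)
          simpa [Commute, SemiconjBy, Units.val_mul] using h
        have hAB := commute_of_commute_nonscalar hd2 hcA hcB hz
        have hABu : (f i k (Ne.symm hki) r) * (f k j hkj 1)
            = (f k j hkj 1) * (f i k (Ne.symm hki) r) :=
          Units.ext (by rw [Units.val_mul, Units.val_mul]; exact hAB.eq)
        have hone := triv_of_rel (hR3 i j k (Ne.symm hki) hkj hij r 1)
          (Or.inr (Or.inr hABu))
        rw [mul_one] at hone
        exact hz ⟨1, by rw [hone]; simp⟩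
    -- Phase B
    intro i j hij r
    obtain ⟨k, hki, hkj⟩ := exists_third (le_refl 3) i j
    obtain ⟨c, hc⟩ := hscal i k (Ne.symm hki) r
    obtain ⟨c', hc'⟩ := hscal k j hkj 1
    have hAB : (f i k (Ne.symm hki) r) * (f k j hkj 1)
        = (f k j hkj 1) * (f i k (Ne.symm hki) r) := by
      apply Units.ext
      rw [Units.val_mul, Units.val_mul, hc, hc']
      simp only [smul_mul_assoc, mul_smul_comm, one_mul, mul_one, smul_smul]
      rw [mul_comm]
    have hone := triv_of_rel (hR3 i j k (Ne.symm hki) hkj hij r 1) (Or.inr (Or.inr hAB))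
    rwa [mul_one] at hone
  | succ m hm ih =>
    intro V _ _ _ hdim f hR0 hR1 hR2 hR3
    rcases subsingleton_or_nontrivial V with hV | hV
    · intro i j hij r
      exact Units.ext (LinearMap.ext fun x => Subsingleton.elim _ _)
    classical
    have hnel : ∀ a : Fin m, a.castSucc ≠ Fin.last m := fun a => (Fin.castSucc_lt_last a).ne
    set lst := Fin.last m with hlstdef
    let T : Fin m × R → Module.End K V :=
      fun a => ((f a.1.castSucc lst (hnel a.1) a.2 : (Module.End K V)ˣ) : Module.End K V)
    have hTcomm : ∀ a b, Commute (T a) (T b) := by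
      rintro ⟨i, r⟩ ⟨j, s⟩
      have h := congrArg Units.val
        (hR1 i.castSucc lst j.castSucc lst (hnel i) (hnel j) (Ne.symm (hnel j)) (hnel i) r s)
      simpa [Commute, SemiconjBy, Units.val_mul] using h
    obtain ⟨v, hv0, hcex⟩ := exists_common_eigenvector (finrank K V) V le_rfl T hTcomm
    choose c hcv using hcex
    have hprod1 : ∀ (i : Fin m) (r : R), c (i, -r) * c (i, r) = 1 := by
      intro i r
      have hu : (f i.castSucc lst (hnel i) r) * (f i.castSucc lst (hnel i) (-r)) = 1 := by
        rw [hR0, mul_inv_cancel]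
      have happ : T (i, r) (T (i, -r) v) = v := by
        have h2 := LinearMap.congr_fun (congrArg Units.val hu) v
        simpa [Units.val_mul, Module.End.mul_apply] using h2
      rw [hcv (i, -r), _root_.map_smul, hcv (i, r), smul_smul] at happ
      exact eq_one_of_smul_eq happ hv0
    have hcne : ∀ (i : Fin m) (r : R), c (i, r) ≠ 0 := by
      intro i r h0
      have := hprod1 i r
      rw [h0, mul_zero] at this
      exact zero_ne_one this
    by_cases Hchar : ∀ a, c a = 1
    · -- all characters trivial : the fixed space V' is nonzero
      -- all characters trivial : the fixed space V' is a nonzero submodule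
      let V' : Submodule K V :=
        { carrier := {x | ∀ a : Fin m × R, T a x = x}
          add_mem' := fun hx hy => by
            intro a
            rw [map_add, hx a, hy a]
          zero_mem' := fun a => map_zero _
          smul_mem' := fun t x hx => by
            intro a
            rw [_root_.map_smul, hx a] }
      have hmemV' : ∀ x : V, x ∈ V' ↔ ∀ a : Fin m × R, T a x = x := fun x => Iff.rfl
      have hvV' : v ∈ V' := by
        rw [hmemV']
        intro a
        rw [hcv a, Hchar a, one_smul]
      have hV'bot : V' ≠ ⊥ := by
        intro h
        rw [h, Submodule.mem_bot] at hvV'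
        exact hv0 hvV'
      by_cases hV'top : V' = ⊤
      · -- all column roots are trivial; propagate
        have hcol : ∀ (i : Fin (m+1)) (hi : i ≠ lst) (r : R), f i lst hi r = 1 := by
          intro i hi r
          obtain ⟨a, rfl⟩ := Fin.exists_castSucc_eq.mpr hi
          apply Units.ext
          apply LinearMap.ext
          intro x
          have hx : x ∈ V' := hV'top ▸ Submodule.mem_top
          have h1 : T (a, r) x = x := hx (a, r)
          simpa using h1
        have hL : ∀ (i j : Fin (m+1)) (hij : i ≠ j) (r : R), i ≠ lst → j ≠ lst →
            f i j hij r = 1 := by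
          intro i j hij r hi hj
          have hrel := hR3 i j lst hi (Ne.symm hj) hij r 1
          have h1 := triv_of_rel hrel (Or.inl (hcol i hi r))
          rwa [mul_one] at h1
        exact propagate_of_L (by omega) lst f hR3 hL
      · -- V' is proper : apply the inductive hypothesis on V' and V ⧸ V'
        have hinv : ∀ (a b : Fin m) (hab : a ≠ b) (s : R), ∀ x ∈ V',
            ((f a.castSucc b.castSucc (castSucc_ne hab) s : (Module.End K V)ˣ) :
              Module.End K V) x ∈ V' := by
          intro a b hab s x hx
          rw [hmemV'] at hx ⊢
          rintro ⟨l, t⟩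
          by_cases hlb : l = b
          · subst hlb
            have hid := hR2 l.castSucc lst a.castSucc (hnel l) (castSucc_ne hab)
              (hnel a) t s
            have happ := LinearMap.congr_fun (congrArg Units.val hid) x
            simp only [Units.val_mul, Module.End.mul_apply] at happ
            have e1 : ((f a.castSucc lst (hnel a) (-(s*t)) : (Module.End K V)ˣ) :
                Module.End K V) x = x := hx (a, -(s*t))
            have e2 : ((f l.castSucc lst (hnel l) t : (Module.End K V)ˣ) :
                Module.End K V) x = x := hx (l, t)
            rw [e1, e2] at happ
            exact happ
          · have hid := hR1 l.castSucc lst a.castSucc b.castSucc (hnel l)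
              (castSucc_ne hab) (Ne.symm (hnel a)) (castSucc_ne hlb) t s
            have happ := LinearMap.congr_fun (congrArg Units.val hid) x
            simp only [Units.val_mul, Module.End.mul_apply] at happ
            have e2 : ((f l.castSucc lst (hnel l) t : (Module.End K V)ˣ) :
                Module.End K V) x = x := hx (l, t)
            rw [e2] at happ
            exact happ
        -- the restricted root system on V'
        let F' : (a b : Fin m) → a ≠ b → R → (Module.End K ↥V')ˣ := fun a b hab s =>
          { val := LinearMap.restrict _ (hinv a b hab s)
            inv := LinearMap.restrict _ (hinv a b hab (-s))
            val_inv := by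
              apply LinearMap.ext
              intro x
              apply Subtype.ext
              simp only [Module.End.mul_apply, LinearMap.restrict_apply, Module.End.one_apply]
              have hu : (f a.castSucc b.castSucc (castSucc_ne hab) s) *
                  (f a.castSucc b.castSucc (castSucc_ne hab) (-s)) = 1 := by
                rw [hR0, mul_inv_cancel]
              have h2 := LinearMap.congr_fun (congrArg Units.val hu) (x : V)
              simpa [Units.val_mul, Module.End.mul_apply] using h2
            inv_val := by
              apply LinearMap.ext
              intro x
              apply Subtype.ext
              simp only [Module.End.mul_apply, LinearMap.restrict_apply, Module.End.one_apply]
              have hu : (f a.castSucc b.castSucc (castSucc_ne hab) (-s)) *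
                  (f a.castSucc b.castSucc (castSucc_ne hab) s) = 1 := by
                rw [hR0, inv_mul_cancel]
              have h2 := LinearMap.congr_fun (congrArg Units.val hu) (x : V)
              simpa [Units.val_mul, Module.End.mul_apply] using h2 }
        have hF'0 : ∀ (a b : Fin m) (hab : a ≠ b) (s : R),
            F' a b hab (-s) = (F' a b hab s)⁻¹ := by
          intro a b hab s
          apply Units.ext
          rfl
        have hF'1 : ∀ (i j k l : Fin m) (hij : i ≠ j) (hkl : k ≠ l), j ≠ k → i ≠ l →
            ∀ (p q : R), F' i j hij p * F' k l hkl q = F' k l hkl q * F' i j hij p := by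
          intro i j k l hij hkl h1 h2 p q
          apply Units.ext
          apply LinearMap.ext
          intro x
          apply Subtype.ext
          have hbase := hR1 i.castSucc j.castSucc k.castSucc l.castSucc
            (castSucc_ne hij) (castSucc_ne hkl) (castSucc_ne h1) (castSucc_ne h2) p q
          have h3 := LinearMap.congr_fun (congrArg Units.val hbase) (x : V)
          simp only [Units.val_mul, Module.End.mul_apply] at h3 ⊢
          simp only [F', LinearMap.restrict_apply]
          exact h3
        have hF'2 : ∀ (i j k : Fin m) (hij : i ≠ j) (hki : k ≠ i) (hkj : k ≠ j) (p q : R),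
            F' i j hij p * F' k i hki q
              = F' k i hki q * F' i j hij p * F' k j hkj (-(q * p)) := by
          intro i j k hij hki hkj p q
          apply Units.ext
          apply LinearMap.ext
          intro x
          apply Subtype.ext
          have hbase := hR2 i.castSucc j.castSucc k.castSucc
            (castSucc_ne hij) (castSucc_ne hki) (castSucc_ne hkj) p q
          have h3 := LinearMap.congr_fun (congrArg Units.val hbase) (x : V)
          simp only [Units.val_mul, Module.End.mul_apply] at h3 ⊢
          simp only [F', LinearMap.restrict_apply]
          exact h3
        have hF'3 : ∀ (i j k : Fin m) (hik : i ≠ k) (hkj : k ≠ j) (hij : i ≠ j) (p q : R),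
            F' i k hik p * F' k j hkj q
              = F' i j hij (p * q) * F' k j hkj q * F' i k hik p := by
          intro i j k hik hkj hij p q
          apply Units.ext
          apply LinearMap.ext
          intro x
          apply Subtype.ext
          have hbase := hR3 i.castSucc j.castSucc k.castSucc
            (castSucc_ne hik) (castSucc_ne hkj) (castSucc_ne hij) p q
          have h3 := LinearMap.congr_fun (congrArg Units.val hbase) (x : V)
          simp only [Units.val_mul, Module.End.mul_apply] at h3 ⊢
          simp only [F', LinearMap.restrict_apply]
          exact h3
        have hrk' : finrank K ↥V' < m := by
          have h1 := Submodule.finrank_lt (K := K) hV'top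
          omega
        have hLsub := ih ↥V' hrk' F' hF'0 hF'1 hF'2 hF'3
        have hLfix : ∀ (a b : Fin m) (hab : a ≠ b) (s : R), ∀ x ∈ V',
            ((f a.castSucc b.castSucc (castSucc_ne hab) s : (Module.End K V)ˣ) :
              Module.End K V) x = x := by
          intro a b hab s x hx
          have h1 := hLsub a b hab s
          have h2 := LinearMap.congr_fun (congrArg Units.val h1) ⟨x, hx⟩
          have h3 := congrArg Subtype.val h2
          simpa [F', LinearMap.restrict_apply] using h3
        -- the induced root system on the quotient V ⧸ V'
        have hle : ∀ (a b : Fin m) (hab : a ≠ b) (s : R),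
            V' ≤ Submodule.comap ((f a.castSucc b.castSucc (castSucc_ne hab) s :
              (Module.End K V)ˣ) : Module.End K V) V' :=
          fun a b hab s x hx => hinv a b hab s x hx
        let Q' : (a b : Fin m) → a ≠ b → R → (Module.End K (V ⧸ V'))ˣ := fun a b hab s =>
          { val := V'.mapQ V' _ (hle a b hab s)
            inv := V'.mapQ V' _ (hle a b hab (-s))
            val_inv := by
              apply LinearMap.ext
              intro x
              obtain ⟨y, rfl⟩ := Submodule.Quotient.mk_surjective V' x
              simp only [Module.End.mul_apply, Submodule.mapQ_apply, Module.End.one_apply]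
              have hu : (f a.castSucc b.castSucc (castSucc_ne hab) s) *
                  (f a.castSucc b.castSucc (castSucc_ne hab) (-s)) = 1 := by
                rw [hR0, mul_inv_cancel]
              have h2 := LinearMap.congr_fun (congrArg Units.val hu) y
              simp only [Units.val_mul, Module.End.mul_apply, Units.val_one,
                Module.End.one_apply] at h2
              rw [h2]
            inv_val := by
              apply LinearMap.ext
              intro x
              obtain ⟨y, rfl⟩ := Submodule.Quotient.mk_surjective V' x
              simp only [Module.End.mul_apply, Submodule.mapQ_apply, Module.End.one_apply]
              have hu : (f a.castSucc b.castSucc (castSucc_ne hab) (-s)) *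
                  (f a.castSucc b.castSucc (castSucc_ne hab) s) = 1 := by
                rw [hR0, inv_mul_cancel]
              have h2 := LinearMap.congr_fun (congrArg Units.val hu) y
              simp only [Units.val_mul, Module.End.mul_apply, Units.val_one,
                Module.End.one_apply] at h2
              rw [h2] }
        have hQ'0 : ∀ (a b : Fin m) (hab : a ≠ b) (s : R),
            Q' a b hab (-s) = (Q' a b hab s)⁻¹ := by
          intro a b hab s
          apply Units.ext
          rfl
        have hQ'1 : ∀ (i j k l : Fin m) (hij : i ≠ j) (hkl : k ≠ l), j ≠ k → i ≠ l →
            ∀ (p q : R), Q' i j hij p * Q' k l hkl q = Q' k l hkl q * Q' i j hij p := by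
          intro i j k l hij hkl h1 h2 p q
          apply Units.ext
          apply LinearMap.ext
          intro x
          obtain ⟨y, rfl⟩ := Submodule.Quotient.mk_surjective V' x
          have hbase := hR1 i.castSucc j.castSucc k.castSucc l.castSucc
            (castSucc_ne hij) (castSucc_ne hkl) (castSucc_ne h1) (castSucc_ne h2) p q
          have h3 := LinearMap.congr_fun (congrArg Units.val hbase) y
          simp only [Units.val_mul, Module.End.mul_apply] at h3 ⊢
          simp only [Q', Submodule.mapQ_apply]
          rw [h3]
        have hQ'2 : ∀ (i j k : Fin m) (hij : i ≠ j) (hki : k ≠ i) (hkj : k ≠ j) (p q : R),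
            Q' i j hij p * Q' k i hki q
              = Q' k i hki q * Q' i j hij p * Q' k j hkj (-(q * p)) := by
          intro i j k hij hki hkj p q
          apply Units.ext
          apply LinearMap.ext
          intro x
          obtain ⟨y, rfl⟩ := Submodule.Quotient.mk_surjective V' x
          have hbase := hR2 i.castSucc j.castSucc k.castSucc
            (castSucc_ne hij) (castSucc_ne hki) (castSucc_ne hkj) p q
          have h3 := LinearMap.congr_fun (congrArg Units.val hbase) y
          simp only [Units.val_mul, Module.End.mul_apply] at h3 ⊢
          simp only [Q', Submodule.mapQ_apply]
          rw [h3]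
        have hQ'3 : ∀ (i j k : Fin m) (hik : i ≠ k) (hkj : k ≠ j) (hij : i ≠ j) (p q : R),
            Q' i k hik p * Q' k j hkj q
              = Q' i j hij (p * q) * Q' k j hkj q * Q' i k hik p := by
          intro i j k hik hkj hij p q
          apply Units.ext
          apply LinearMap.ext
          intro x
          obtain ⟨y, rfl⟩ := Submodule.Quotient.mk_surjective V' x
          have hbase := hR3 i.castSucc j.castSucc k.castSucc
            (castSucc_ne hik) (castSucc_ne hkj) (castSucc_ne hij) p q
          have h3 := LinearMap.congr_fun (congrArg Units.val hbase) y
          simp only [Units.val_mul, Module.End.mul_apply] at h3 ⊢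
          simp only [Q', Submodule.mapQ_apply]
          rw [h3]
        have hrkQ : finrank K (V ⧸ V') < m := by
          have h1 := Submodule.finrank_quotient_add_finrank V'
          haveI : Nontrivial ↥V' := Submodule.nontrivial_iff_ne_bot.mpr hV'bot
          have h2 : 0 < finrank K ↥V' := finrank_pos
          omega
        have hQsub := ih (V ⧸ V') hrkQ Q' hQ'0 hQ'1 hQ'2 hQ'3
        have hQfix : ∀ (a b : Fin m) (hab : a ≠ b) (s : R) (x : V),
            ((f a.castSucc b.castSucc (castSucc_ne hab) s : (Module.End K V)ˣ) :
              Module.End K V) x - x ∈ V' := by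
          intro a b hab s x
          have h1 := hQsub a b hab s
          have h2 := LinearMap.congr_fun (congrArg Units.val h1) (Submodule.Quotient.mk x)
          simp only [Submodule.mapQ_apply, Units.val_one, Module.End.one_apply] at h2
          exact (Submodule.Quotient.eq V').mp h2
        -- the L-roots pairwise commute
        have habel : ∀ (a b a' b' : Fin m) (hab : a ≠ b) (ha'b' : a' ≠ b') (s s' : R),
            (f a.castSucc b.castSucc (castSucc_ne hab) s) *
              (f a'.castSucc b'.castSucc (castSucc_ne ha'b') s') =
            (f a'.castSucc b'.castSucc (castSucc_ne ha'b') s') *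
              (f a.castSucc b.castSucc (castSucc_ne hab) s) := by
          intro a b a' b' hab ha'b' s s'
          apply Units.ext
          rw [Units.val_mul, Units.val_mul]
          apply LinearMap.ext
          intro x
          simp only [Module.End.mul_apply]
          calc ((f a.castSucc b.castSucc (castSucc_ne hab) s : (Module.End K V)ˣ) :
                Module.End K V)
                (((f a'.castSucc b'.castSucc (castSucc_ne ha'b') s' : (Module.End K V)ˣ) :
                Module.End K V) x)
              = ((f a.castSucc b.castSucc (castSucc_ne hab) s : (Module.End K V)ˣ) :
                Module.End K V)
                (x + (((f a'.castSucc b'.castSucc (castSucc_ne ha'b') s' :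
                  (Module.End K V)ˣ) : Module.End K V) x - x)) := by
                congr 1
                abel
            _ = ((f a.castSucc b.castSucc (castSucc_ne hab) s : (Module.End K V)ˣ) :
                Module.End K V) x +
                (((f a'.castSucc b'.castSucc (castSucc_ne ha'b') s' :
                  (Module.End K V)ˣ) : Module.End K V) x - x) := by
                rw [map_add, hLfix a b hab s _ (hQfix a' b' ha'b' s' x)]
            _ = ((f a'.castSucc b'.castSucc (castSucc_ne ha'b') s' : (Module.End K V)ˣ) :
                Module.End K V) x +
                (((f a.castSucc b.castSucc (castSucc_ne hab) s :
                  (Module.End K V)ˣ) : Module.End K V) x - x) := by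
                abel
            _ = ((f a'.castSucc b'.castSucc (castSucc_ne ha'b') s' : (Module.End K V)ˣ) :
                Module.End K V)
                (x + (((f a.castSucc b.castSucc (castSucc_ne hab) s :
                  (Module.End K V)ˣ) : Module.End K V) x - x)) := by
                rw [map_add, hLfix a' b' ha'b' s' _ (hQfix a b hab s x)]
            _ = ((f a'.castSucc b'.castSucc (castSucc_ne ha'b') s' : (Module.End K V)ˣ) :
                Module.End K V)
                (((f a.castSucc b.castSucc (castSucc_ne hab) s : (Module.End K V)ˣ) :
                Module.End K V) x) := by
                congr 1
                abel
        have hL : ∀ (i j : Fin (m+1)) (hij : i ≠ j) (r : R), i ≠ lst → j ≠ lst →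
            f i j hij r = 1 := by
          intro i j hij r hi hj
          obtain ⟨a, rfl⟩ := Fin.exists_castSucc_eq.mpr hi
          obtain ⟨b, rfl⟩ := Fin.exists_castSucc_eq.mpr hj
          have hab : a ≠ b := fun h => hij (by rw [h])
          obtain ⟨k', hk'a, hk'b⟩ := exists_third hm a b
          have hrel := hR3 a.castSucc b.castSucc k'.castSucc
            (castSucc_ne (Ne.symm hk'a)) (castSucc_ne hk'b) hij r 1
          have hcomm := habel a k' k' b (Ne.symm hk'a) hk'b r 1
          have h1 := triv_of_rel hrel (Or.inr (Or.inr hcomm))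
          rwa [mul_one] at h1
        exact propagate_of_L (by omega) lst f hR3 hL

    · -- some character nontrivial : contradiction by counting
      exfalso
      push_neg at Hchar
      obtain ⟨⟨i₀, r₀⟩, hκ⟩ := Hchar
      have hκ' : c (i₀, -r₀) ≠ 1 := by
        intro h1
        apply hκ
        have h2 := hprod1 i₀ r₀
        rw [h1, one_mul] at h2
        exact h2
      set σ := {b : Fin m // b ≠ i₀} with hσdef
      let g : σ → (Module.End K V)ˣ :=
        fun b => f i₀.castSucc b.1.castSucc (castSucc_ne (Ne.symm b.2)) 1
      have hstep : ∀ (x : V) (d : Fin m × R → K), (∀ a, T a x = d a • x) →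
          ∀ (b : σ) (l : Fin m) (s : R),
          T (l, s) (((g b : (Module.End K V)ˣ) : Module.End K V) x)
            = (d (l, s) * (if l = b.1 then d (i₀, -s) else 1)) •
              (((g b : (Module.End K V)ˣ) : Module.End K V) x) := by
        intro x d hx b l s
        obtain ⟨bv, hbv⟩ := b
        by_cases hlb : l = bv
        · subst hlb
          have hid := hR2 l.castSucc lst i₀.castSucc (hnel l)
            (castSucc_ne (Ne.symm hbv)) (hnel i₀) s 1
          have happ := LinearMap.congr_fun (congrArg Units.val hid) x
          simp only [Units.val_mul, Module.End.mul_apply] at happ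
          rw [if_pos rfl]
          rw [show ((g ⟨l, hbv⟩ : (Module.End K V)ˣ) : Module.End K V)
            = ((f i₀.castSucc l.castSucc (castSucc_ne (Ne.symm hbv)) 1 :
              (Module.End K V)ˣ) : Module.End K V) from rfl]
          rw [show T (l, s) = ((f l.castSucc lst (hnel l) s : (Module.End K V)ˣ) :
              Module.End K V) from rfl]
          rw [happ]
          rw [show ((f i₀.castSucc lst (hnel i₀) (-(1 * s)) : (Module.End K V)ˣ) :
              Module.End K V) x = T (i₀, -(1*s)) x from rfl,
            hx (i₀, -(1*s)),
            show ((f l.castSucc lst (hnel l) s : (Module.End K V)ˣ) :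
              Module.End K V) = T (l, s) from rfl]
          rw [_root_.map_smul, hx (l, s), _root_.map_smul, _root_.map_smul, smul_smul,
            one_mul, mul_comm]
        · have hid := hR1 l.castSucc lst i₀.castSucc bv.castSucc (hnel l)
            (castSucc_ne (Ne.symm hbv)) (Ne.symm (hnel i₀)) (castSucc_ne hlb) s 1
          have happ := LinearMap.congr_fun (congrArg Units.val hid) x
          simp only [Units.val_mul, Module.End.mul_apply] at happ
          rw [if_neg hlb, mul_one]
          rw [show ((g ⟨bv, hbv⟩ : (Module.End K V)ˣ) : Module.End K V)
            = ((f i₀.castSucc bv.castSucc (castSucc_ne (Ne.symm hbv)) 1 :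
              (Module.End K V)ˣ) : Module.End K V) from rfl]
          rw [show T (l, s) = ((f l.castSucc lst (hnel l) s : (Module.End K V)ˣ) :
              Module.End K V) from rfl]
          rw [happ, show ((f l.castSucc lst (hnel l) s : (Module.End K V)ˣ) :
              Module.End K V) = T (l, s) from rfl, hx (l, s), _root_.map_smul]
      -- vectors indexed by subsets of σ
      have hgcomm : ∀ (b : σ), ∀ (b' : σ), Commute (g b) (g b') := by
        intro b b'
        have h := hR1 i₀.castSucc b.1.castSucc i₀.castSucc b'.1.castSucc
          (castSucc_ne (Ne.symm b.2)) (castSucc_ne (Ne.symm b'.2))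
          (castSucc_ne b.2) (castSucc_ne (Ne.symm b'.2)) 1 1
        exact h
      let P : Finset σ → (Module.End K V)ˣ :=
        fun S => S.noncommProd g (fun x _ y _ _ => hgcomm x y)
      let w : Finset σ → V := fun S => ((P S : (Module.End K V)ˣ) : Module.End K V) v
      let χv : Finset σ → Fin m × R → K := fun S a =>
        c a * (if h : a.1 = i₀ then 1 else if (⟨a.1, h⟩ : σ) ∈ S then c (i₀, -a.2) else 1)
      have hwchar : ∀ S : Finset σ, ∀ a, T a (w S) = χv S a • w S := by
        intro S
        induction S using Finset.induction_on with
        | empty =>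
          intro a
          have h1 : w ∅ = v := by
            show ((1 : (Module.End K V)ˣ) : Module.End K V) v = v
            simp
          have h2 : χv ∅ a = c a := by simp [χv]
          rw [h1, h2]
          exact hcv a
        | @insert b S hb ihS =>
          intro a
          obtain ⟨l, s⟩ := a
          have hw : w (insert b S) = ((g b : (Module.End K V)ˣ) : Module.End K V) (w S) := by
            have hP : P (insert b S) = g b * P S := by
              simp only [P]
              exact Finset.noncommProd_insert_of_notMem _ _ _ _ hb
            simp only [w, hP, Units.val_mul, Module.End.mul_apply]
          rw [hw, hstep (w S) (χv S) ihS b l s]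
          congr 1
          by_cases hli : l = i₀
          · subst hli
            have hlb : l ≠ b.1 := fun h => b.2 h.symm
            rw [if_neg hlb, mul_one]
            simp [χv]
          · by_cases hlb : l = b.1
            · rw [if_pos hlb]
              have h1 : χv S (i₀, -s) = c (i₀, -s) := by simp [χv]
              rw [h1]
              have hmem : (⟨l, hli⟩ : σ) = b := Subtype.ext hlb
              have h2 : χv S (l, s) = c (l, s) := by
                simp only [χv, dif_neg hli]
                rw [if_neg (by rw [hmem]; exact hb), mul_one]
              have h3 : χv (insert b S) (l, s) = c (l, s) * c (i₀, -s) := by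
                simp only [χv, dif_neg hli]
                rw [if_pos (by rw [hmem]; exact Finset.mem_insert_self b S)]
              rw [h2, h3]
            · rw [if_neg hlb, mul_one]
              have hmem : (⟨l, hli⟩ : σ) ≠ b := fun h => hlb (congrArg Subtype.val h)
              have hiff : (⟨l, hli⟩ : σ) ∈ insert b S ↔ (⟨l, hli⟩ : σ) ∈ S := by
                simp [Finset.mem_insert, hmem]
              simp only [χv, dif_neg hli, hiff]
      have hwne : ∀ S : Finset σ, w S ≠ 0 := by
        intro S h0
        apply hv0
        have h1 := LinearMap.congr_fun (congrArg Units.val (inv_mul_cancel (P S))) v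
        simp only [Units.val_mul, Module.End.mul_apply, Units.val_one,
          Module.End.one_apply] at h1
        rw [show ((P S : (Module.End K V)ˣ) : Module.End K V) v = w S from rfl, h0,
          map_zero] at h1
        exact h1.symm
      have hsep : ∀ S S' : Finset σ, S ≠ S' → ∃ a, χv S a ≠ χv S' a := by
        intro S S' hne
        have hex : ∃ b : σ, ¬ (b ∈ S ↔ b ∈ S') := by
          by_contra hall
          push_neg at hall
          exact hne (Finset.ext_iff.mpr fun b => hall b)
        obtain ⟨⟨bv, hbv⟩, hb⟩ := hex
        refine ⟨(bv, r₀), fun heq => ?_⟩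
        simp only [χv, dif_neg hbv] at heq
        rcases Classical.em ((⟨bv, hbv⟩ : σ) ∈ S) with hS | hS <;>
          rcases Classical.em ((⟨bv, hbv⟩ : σ) ∈ S') with hS' | hS'
        · exact hb (iff_of_true hS hS')
        · rw [if_pos hS, if_neg hS', mul_one] at heq
          refine hκ' (mul_left_cancel₀ (hcne bv r₀) ?_)
          rw [mul_one]
          exact heq
        · rw [if_neg hS, if_pos hS', mul_one] at heq
          refine hκ' (mul_left_cancel₀ (hcne bv r₀) ?_)
          rw [mul_one]
          exact heq.symm
        · exact hb (iff_of_false hS hS')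
      have hcard := card_le_finrank_of_sep_eigenvectors T w χv hwne hwchar hsep
      rw [Fintype.card_finset] at hcard
      have hσcard : Fintype.card σ = m - 1 := by
        have h1 := Fintype.card_subtype_compl (fun b : Fin m => b = i₀)
        rw [Fintype.card_subtype_eq, Fintype.card_fin] at h1
        exact h1
      rw [hσcard] at hcard
      have hlt := lt_two_pow_pred m (by omega)
      have h2 : finrank K V ≤ m := by omega
      exact absurd (hcard.trans h2) (not_le.mpr hlt)



/-- All values of a homomorphism from the elementary group on the elementary
generators are trivial, in dimension `n < N`. -/
theorem rho_elem_trivial (R : Type*) [Ring R] (N n : ℕ) (hN : 3 ≤ N) (hn : n < N)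
    (K : Type*) [Field K] [IsAlgClosed K]
    (ρ : ↥(ElementaryGroup R N) →* (Matrix (Fin n) (Fin n) K)ˣ) :
    ∀ γ : ↥(ElementaryGroup R N), ρ γ = 1 := by
  classical
  let E : Matrix (Fin n) (Fin n) K ≃* Module.End K (Fin n → K) :=
    (Matrix.toLinAlgEquiv' : Matrix (Fin n) (Fin n) K ≃ₐ[K] _).toRingEquiv.toMulEquiv
  let F : ↥(ElementaryGroup R N) →* (Module.End K (Fin n → K))ˣ :=
    (Units.mapEquiv E).toMonoidHom.comp ρ
  let eE : (i j : Fin N) → i ≠ j → R → ↥(ElementaryGroup R N) := fun i j hij r =>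
    ⟨elemGL R N i j hij r, elemGL_mem R N i j hij r⟩
  have heEneg : ∀ (i j : Fin N) (hij : i ≠ j) (r : R),
      eE i j hij (-r) = (eE i j hij r)⁻¹ :=
    fun i j hij r => Subtype.ext (elemGL_neg i j hij r)
  have hgen : ∀ (i j : Fin N) (hij : i ≠ j) (r : R), F (eE i j hij r) = 1 := by
    have hkey := key (K := K) R N hN (Fin n → K)
      (by rw [finrank_fintype_fun_eq_card, Fintype.card_fin]; exact hn)
      (fun i j hij r => F (eE i j hij r))
      (by
        intro i j h r
        show F (eE i j h (-r)) = (F (eE i j h r))⁻¹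
        rw [heEneg, _root_.map_inv])
      (by
        intro i j k l hij hkl h1 h2 p q
        show F (eE i j hij p) * F (eE k l hkl q) = F (eE k l hkl q) * F (eE i j hij p)
        rw [← _root_.map_mul, ← _root_.map_mul]
        congr 1
        exact Subtype.ext (elemGL_comm i j k l hij hkl h1 h2 p q))
      (by
        intro i j k hij hki hkj p q
        show F (eE i j hij p) * F (eE k i hki q)
          = F (eE k i hki q) * F (eE i j hij p) * F (eE k j hkj (-(q * p)))
        rw [← _root_.map_mul, ← _root_.map_mul, ← _root_.map_mul]
        congr 1
        exact Subtype.ext (elemGL_comm2 i j k hij hki hkj p q))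
      (by
        intro i j k hik hkj hij p q
        show F (eE i k hik p) * F (eE k j hkj q)
          = F (eE i j hij (p * q)) * F (eE k j hkj q) * F (eE i k hik p)
        rw [← _root_.map_mul, ← _root_.map_mul, ← _root_.map_mul]
        congr 1
        exact Subtype.ext (elemGL_comm3 i j k hik hkj hij p q))
    exact fun i j hij r => hkey i j hij r
  have hgenρ : ∀ (i j : Fin N) (hij : i ≠ j) (r : R), ρ (eE i j hij r) = 1 := by
    intro i j hij r
    have h2 : (Units.mapEquiv E) (ρ (eE i j hij r)) = 1 := hgen i j hij r
    exact (MulEquiv.map_eq_one_iff (Units.mapEquiv E)).mp h2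
  intro γ
  obtain ⟨x, hx⟩ := γ
  refine Subgroup.closure_induction
    (p := fun x hx => ρ ⟨x, hx⟩ = 1) ?_ ?_ ?_ ?_ hx
  · rintro y ⟨i, j, hij, r, rfl⟩
    exact hgenρ i j hij r
  · exact map_one ρ
  · intro y z hy hz hρy hρz
    have h3 : (⟨y * z, (Subgroup.mul_mem _ hy hz : y * z ∈ _)⟩ : ↥(ElementaryGroup R N))
        = ⟨y, hy⟩ * ⟨z, hz⟩ := rfl
    rw [h3, _root_.map_mul, hρy, hρz, one_mul]
  · intro y hy hρy
    have h3 : (⟨y⁻¹, (Subgroup.inv_mem _ hy : y⁻¹ ∈ _)⟩ : ↥(ElementaryGroup R N))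
        = (⟨y, hy⟩)⁻¹ := rfl
    rw [h3, _root_.map_inv, hρy, inv_one]


end Statement14Aux

/-- For a finitely generated ring `R`, `2 ≤ n ≤ k`, and an
algebraically closed field `K`, there are only finitely many conjugacy classes of
irreducible representations `E_{k+1}(R) → GL_n(K)`. -/
theorem statement14 (R : Type*) [Ring R]
    (hR : ∃ s : Finset R, Subring.closure (s : Set R) = ⊤)
    (n k : ℕ) (hn : 2 ≤ n) (hk : n ≤ k)
    (K : Type*) [Field K] [IsAlgClosed K] :
    ∃ T : Set (↥(ElementaryGroup R (k + 1)) →* (Matrix (Fin n) (Fin n) K)ˣ), T.Finite ∧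
      ∀ ρ : ↥(ElementaryGroup R (k + 1)) →* (Matrix (Fin n) (Fin n) K)ˣ,
        (∀ W : Submodule K (Fin n → K),
          (∀ γ : ↥(ElementaryGroup R (k + 1)), ∀ w ∈ W,
            Matrix.mulVec ((ρ γ).val) w ∈ W) → W = ⊥ ∨ W = ⊤) →
        ∃ ρ' ∈ T, ∃ g : (Matrix (Fin n) (Fin n) K)ˣ, ∀ γ, ρ' γ = g * ρ γ * g⁻¹ := by
  classical
  refine ⟨∅, Set.finite_empty, ?_⟩
  intro ρ hirr
  exfalso
  have htriv := rho_elem_trivial R (k + 1) n (by omega) (by omega) K ρ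
  let i0 : Fin n := ⟨0, by omega⟩
  let i1 : Fin n := ⟨1, by omega⟩
  have hi : i0 ≠ i1 := by simp [i0, i1, Fin.ext_iff]
  set W : Submodule K (Fin n → K) := Submodule.span K {Pi.single i0 1} with hW
  have hWinv : ∀ γ : ↥(ElementaryGroup R (k + 1)), ∀ w ∈ W,
      Matrix.mulVec ((ρ γ).val) w ∈ W := by
    intro γ w hw
    rw [htriv γ]
    simpa only [Units.val_one, Matrix.one_mulVec] using hw
  rcases hirr W hWinv with hbot | htop
  · rw [hW] at hbot
    have h1 := Submodule.span_singleton_eq_bot.mp hbot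
    have h2 := congrFun h1 i0
    rw [Pi.single_eq_same] at h2
    exact one_ne_zero h2
  · have h1 : (Pi.single i1 1 : Fin n → K) ∈ W := htop ▸ Submodule.mem_top
    rw [hW] at h1
    obtain ⟨a, ha⟩ := Submodule.mem_span_singleton.mp h1
    have h2 := congrFun ha i1
    simp only [Pi.smul_apply, Pi.single_eq_same, Pi.single_eq_of_ne (Ne.symm hi),
      smul_eq_mul, mul_zero] at h2
    exact zero_ne_one h2


end Paper
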